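/- arXiv:2006.14664 — 4 statements merged into one kernel-verified Lean document; each statement's English description precedes it below -/
import Mathlib

section
/- Let i ≥ 1 and let R = ℤ[X₀,…,Xᵢ] be the multivariate polynomial ring in i+1 variables (indexed by Fin (i+1)). For a subset S of the index set, write ℓ_S = Σ_{j∈S} X_j. In the formal power series ring R⟦t⟧, set F = ∏_{S : (i+1−|S|) even} (1 + ℓ_S·t) and G = ∏_{S : (i+1−|S|) odd} (1 + ℓ_S·t), where the products run over all subsets S of Fin (i+1) (including the empty set, with ℓ_∅ = 0). Then F ≡ G mod t^{i+1}; that is, the coefficients of t^k in F and G agree for every k with 0 ≤ k ≤ i. (Equivalently, since G has constant coefficient 1 and is hence a unit, the coefficient of t^k in F·G⁻¹ vanishes for all 1 ≤ k ≤ i.) -/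
section Combinatorial

open Finset

variable {R : Type*} [CommRing R] {ι : Type*} [Fintype ι] [DecidableEq ι]

lemma lemB (T : Finset ι) (hT : T ≠ Finset.univ) :
    ∑ S : Finset ι, (if T ⊆ S then (-1 : R) ^ S.card else 0) = 0 := by
  rw [← Finset.sum_filter]
  have hbij : ∑ S ∈ Finset.univ.filter (fun S => T ⊆ S), (-1 : R) ^ S.card
      = ∑ U ∈ Tᶜ.powerset, (-1 : R) ^ (T.card + U.card) := by
    refine Finset.sum_nbij' (fun S => S \ T) (fun U => T ∪ U) ?_ ?_ ?_ ?_ ?_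
    · intro S hS
      simp only [Finset.mem_filter] at hS
      rw [Finset.mem_powerset]
      intro a ha
      rw [Finset.mem_sdiff] at ha
      simpa using ha.2
    · intro U hU
      simp [Finset.mem_filter]
    · intro S hS
      simp only [Finset.mem_filter] at hS
      exact Finset.union_sdiff_of_subset hS.2
    · intro U hU
      simp only [Finset.mem_powerset] at hU
      have hd : Disjoint T U := Finset.disjoint_left.2 fun a haT haU =>
        (Finset.mem_compl.1 (hU haU)) haT
      exact Finset.union_sdiff_cancel_left hd
    · intro S hS
      simp only [Finset.mem_filter] at hS
      congr 1
      rw [Finset.card_sdiff_of_subset hS.2]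
      have := Finset.card_le_card hS.2
      omega
  rw [hbij]
  have hne : Tᶜ.Nonempty := by
    rw [← Finset.card_pos]
    have : T.card < Fintype.card ι := (Finset.card_lt_iff_ne_univ T).2 hT
    rw [Finset.card_compl]; omega
  have hz := Finset.sum_powerset_neg_one_pow_card_of_nonempty (α := ι) hne
  calc ∑ U ∈ Tᶜ.powerset, (-1 : R) ^ (T.card + U.card)
      = (-1 : R) ^ T.card * ∑ U ∈ Tᶜ.powerset, (-1 : R) ^ U.card := by
        rw [Finset.mul_sum]; exact Finset.sum_congr rfl fun U _ => by rw [pow_add]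
    _ = (-1 : R) ^ T.card * ((∑ U ∈ Tᶜ.powerset, (-1 : ℤ) ^ U.card : ℤ) : R) := by push_cast; ring
    _ = 0 := by rw [hz]; simp

lemma lemA (x : ι → R) (m : ℕ) (hm : m < Fintype.card ι) :
    ∑ S : Finset ι, (-1 : R) ^ S.card * (∑ j ∈ S, x j) ^ m = 0 := by
  have expand : ∀ S : Finset ι, (∑ j ∈ S, x j) ^ m
      = ∑ p : Fin m → ι, (if Finset.image p Finset.univ ⊆ S then ∏ i, x (p i) else 0) := by
    intro S
    rw [Finset.sum_pow' S x m, ← Finset.sum_filter]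
    congr 1
    ext p
    simp [Fintype.mem_piFinset, Finset.image_subset_iff]
  simp_rw [expand, Finset.mul_sum]
  rw [Finset.sum_comm]
  refine Finset.sum_eq_zero fun p _ => ?_
  have hT : Finset.image p Finset.univ ≠ Finset.univ := by
    intro h
    have h1 : (Finset.image p Finset.univ).card ≤ m :=
      le_trans Finset.card_image_le (by simp)
    rw [h, Finset.card_univ] at h1
    omega
  calc ∑ S : Finset ι, (-1:R)^S.card * (if Finset.image p Finset.univ ⊆ S then ∏ i, x (p i) else 0)
      = (∑ S : Finset ι, if Finset.image p Finset.univ ⊆ S then (-1:R)^S.card else 0)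
          * ∏ i, x (p i) := by
        rw [Finset.sum_mul]
        exact Finset.sum_congr rfl fun S _ => by split <;> simp [mul_comm]
    _ = 0 := by rw [lemB _ hT, zero_mul]

lemma lemC (x : ι → R) (m : ℕ) (hm : m < Fintype.card ι) :
    ∑ S ∈ Finset.univ.filter (fun S : Finset ι => Even (Fintype.card ι - S.card)),
        (∑ j ∈ S, x j) ^ m
      = ∑ S ∈ Finset.univ.filter (fun S : Finset ι => Odd (Fintype.card ι - S.card)),
        (∑ j ∈ S, x j) ^ m := by
  set N := Fintype.card ι with hN
  have key : ∑ S : Finset ι, (-1 : R) ^ (N - S.card) * (∑ j ∈ S, x j) ^ m = 0 := by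
    have hsgn : ∀ S : Finset ι, (-1 : R) ^ (N - S.card) = (-1) ^ N * (-1) ^ S.card := by
      intro S
      have hc : S.card ≤ N := by rw [hN, ← Finset.card_univ]; exact Finset.card_le_univ S
      calc (-1 : R) ^ (N - S.card) = (-1) ^ (N - S.card) * ((-1) ^ 2) ^ S.card := by simp
        _ = (-1) ^ (N - S.card + 2 * S.card) := by rw [← pow_mul, ← pow_add]
        _ = (-1) ^ (N + S.card) := by congr 1; omega
        _ = (-1) ^ N * (-1) ^ S.card := pow_add _ _ _
    simp_rw [hsgn, mul_assoc]
    rw [← Finset.mul_sum, lemA x m hm, mul_zero]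
  rw [← Finset.sum_filter_add_sum_filter_not Finset.univ
    (fun S : Finset ι => Even (N - S.card))] at key
  have e1 : ∑ S ∈ Finset.univ.filter (fun S : Finset ι => Even (N - S.card)),
      (-1 : R) ^ (N - S.card) * (∑ j ∈ S, x j) ^ m
      = ∑ S ∈ Finset.univ.filter (fun S : Finset ι => Even (N - S.card)), (∑ j ∈ S, x j) ^ m :=
    Finset.sum_congr rfl fun S hS => by
      rw [(Finset.mem_filter.1 hS).2.neg_one_pow, one_mul]
  have hfo : Finset.univ.filter (fun S : Finset ι => ¬ Even (N - S.card))
      = Finset.univ.filter (fun S : Finset ι => Odd (N - S.card)) := by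
    apply Finset.filter_congr
    intro S _
    exact Nat.not_even_iff_odd
  have e2 : ∑ S ∈ Finset.univ.filter (fun S : Finset ι => ¬ Even (N - S.card)),
      (-1 : R) ^ (N - S.card) * (∑ j ∈ S, x j) ^ m
      = -∑ S ∈ Finset.univ.filter (fun S : Finset ι => Odd (N - S.card)), (∑ j ∈ S, x j) ^ m := by
    rw [hfo, ← Finset.sum_neg_distrib]
    refine Finset.sum_congr rfl fun S hS => ?_
    rw [((Finset.mem_filter.1 hS).2).neg_one_pow]
    ring
  rw [e1, e2] at key
  exact eq_of_sub_eq_zero (by rw [sub_eq_add_neg]; exact key)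

end Combinatorial

section PS

open PowerSeries

variable {R : Type*} [CommRing R]

noncomputable def geom (a : R) : R⟦X⟧ := PowerSeries.mk fun n => (-a) ^ n

lemma geom_coeff (a : R) (n : ℕ) : PowerSeries.coeff n (geom a) = (-a) ^ n :=
  PowerSeries.coeff_mk _ _

lemma one_add_mul_geom (a : R) :
    (1 + PowerSeries.C a * PowerSeries.X) * geom a = 1 := by
  ext n
  rw [add_mul, one_mul, map_add, mul_assoc, PowerSeries.coeff_C_mul]
  cases n with
  | zero => simp [geom]
  | succ n =>
    rw [PowerSeries.coeff_succ_X_mul]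
    simp only [geom, PowerSeries.coeff_mk, PowerSeries.coeff_one, Nat.succ_ne_zero, if_false]
    ring

lemma deriv_one_add (a : R) :
    PowerSeries.derivative R (1 + PowerSeries.C a * PowerSeries.X) = PowerSeries.C a := by
  rw [map_add, Derivation.leibniz]
  simp

lemma deriv_prod {ι' : Type*} (c : ι' → R) (𝒜 : Finset ι') :
    PowerSeries.derivative R (∏ S ∈ 𝒜, (1 + PowerSeries.C (c S) * PowerSeries.X))
      = (∏ S ∈ 𝒜, (1 + PowerSeries.C (c S) * PowerSeries.X))
        * ∑ S ∈ 𝒜, PowerSeries.C (c S) * geom (c S) := by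
  classical
  induction 𝒜 using Finset.cons_induction with
  | empty => simp
  | cons a s ha ih =>
    rw [Finset.prod_cons, Finset.sum_cons, Derivation.leibniz, ih, deriv_one_add]
    simp only [smul_eq_mul]
    have hu := one_add_mul_geom (c a)
    linear_combination (-(∏ S ∈ s, (1 + PowerSeries.C (c S) * PowerSeries.X))
      * PowerSeries.C (c a)) * hu

end PS

/-- **Lemma (vanishing), splitting-principle form.**
For `i ≥ 1`, with one variable `X j` for each `j : Fin (i+1)` (the first Chern classes of
the invertible sheaves `L₁, …, L_{i+1}`), set `ℓ_S = ∑_{j ∈ S} X j` for each subset `S`.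
Let `F` be the product of `1 + ℓ_S·t` over subsets `S` with `i + 1 - |S|` even, and `G` the
analogous product over subsets with `i + 1 - |S|` odd.  Then the coefficients of `t^k` in
`F` and `G` agree for all `0 ≤ k ≤ i`. -/
theorem stmt0 (i : ℕ) (hi : 1 ≤ i)
    (F G : PowerSeries (MvPolynomial (Fin (i + 1)) ℤ))
    (hF : F = ∏ S ∈ Finset.univ.filter
        (fun S : Finset (Fin (i + 1)) => Even (i + 1 - S.card)),
      (1 + PowerSeries.C (R := MvPolynomial (Fin (i + 1)) ℤ) (∑ j ∈ S, MvPolynomial.X j) *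
        PowerSeries.X))
    (hG : G = ∏ S ∈ Finset.univ.filter
        (fun S : Finset (Fin (i + 1)) => Odd (i + 1 - S.card)),
      (1 + PowerSeries.C (R := MvPolynomial (Fin (i + 1)) ℤ) (∑ j ∈ S, MvPolynomial.X j) *
        PowerSeries.X)) :
    ∀ k ≤ i, PowerSeries.coeff (R := MvPolynomial (Fin (i + 1)) ℤ) k F =
      PowerSeries.coeff (R := MvPolynomial (Fin (i + 1)) ℤ) k G := by
  classical
  set c : Finset (Fin (i + 1)) → MvPolynomial (Fin (i + 1)) ℤ :=
    fun S => ∑ j ∈ S, MvPolynomial.X j with hc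
  set A := Finset.univ.filter (fun S : Finset (Fin (i + 1)) => Even (i + 1 - S.card)) with hA
  set B := Finset.univ.filter (fun S : Finset (Fin (i + 1)) => Odd (i + 1 - S.card)) with hB
  set SA : PowerSeries (MvPolynomial (Fin (i + 1)) ℤ) :=
    ∑ S ∈ A, PowerSeries.C (c S) * geom (c S) with hSA
  set SB : PowerSeries (MvPolynomial (Fin (i + 1)) ℤ) :=
    ∑ S ∈ B, PowerSeries.C (c S) * geom (c S) with hSB
  -- power sums vanish
  have hps : ∀ m, m < i → PowerSeries.coeff m (SA - SB) = 0 := by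
    intro m hm
    have hcard : m + 1 < Fintype.card (Fin (i + 1)) := by
      rw [Fintype.card_fin]; omega
    have hCle := lemC (R := MvPolynomial (Fin (i + 1)) ℤ) (ι := Fin (i + 1))
      MvPolynomial.X (m + 1) hcard
    simp only [Fintype.card_fin] at hCle
    have hterm : ∀ S : Finset (Fin (i + 1)),
        PowerSeries.coeff m (PowerSeries.C (c S) * geom (c S))
          = (-1 : MvPolynomial (Fin (i + 1)) ℤ) ^ m * (c S) ^ (m + 1) := by
      intro S
      rw [PowerSeries.coeff_C_mul, geom_coeff, neg_pow]
      ring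
    rw [hSA, hSB, map_sub, map_sum, map_sum,
      Finset.sum_congr rfl (fun S _ => hterm S), Finset.sum_congr rfl (fun S _ => hterm S),
      ← Finset.mul_sum, ← Finset.mul_sum, hA, hB, hc]
    rw [hCle]
    ring
  have hdvd : (PowerSeries.X : PowerSeries (MvPolynomial (Fin (i + 1)) ℤ)) ^ i ∣ (SA - SB) :=
    PowerSeries.X_pow_dvd_iff.2 hps
  -- derivative identity
  have hdF := deriv_prod (R := MvPolynomial (Fin (i + 1)) ℤ) c A
  have hdG := deriv_prod (R := MvPolynomial (Fin (i + 1)) ℤ) c B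
  have hFG : PowerSeries.derivative (MvPolynomial (Fin (i + 1)) ℤ) F * G
      - F * PowerSeries.derivative (MvPolynomial (Fin (i + 1)) ℤ) G
      = (F * G) * (SA - SB) := by
    rw [hF, hG, hdF, hdG, hSA, hSB]
    ring
  -- constant coefficients
  have hF0 : PowerSeries.coeff (R := MvPolynomial (Fin (i + 1)) ℤ) 0 F = 1 := by
    rw [hF, PowerSeries.coeff_zero_eq_constantCoeff, map_prod]
    refine Finset.prod_eq_one fun S _ => by simp
  have hG0 : PowerSeries.coeff (R := MvPolynomial (Fin (i + 1)) ℤ) 0 G = 1 := by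
    rw [hG, PowerSeries.coeff_zero_eq_constantCoeff, map_prod]
    refine Finset.prod_eq_one fun S _ => by simp
  -- main induction
  intro k
  induction k using Nat.strong_induction_on with
  | _ k IH =>
    intro hk
    cases k with
    | zero => rw [hF0, hG0]
    | succ k' =>
      have hc0 : PowerSeries.coeff (R := MvPolynomial (Fin (i + 1)) ℤ) k'
          (PowerSeries.derivative (MvPolynomial (Fin (i + 1)) ℤ) F * G
            - F * PowerSeries.derivative (MvPolynomial (Fin (i + 1)) ℤ) G) = 0 := by
        rw [hFG]
        exact PowerSeries.X_pow_dvd_iff.1 (Dvd.dvd.mul_left hdvd (F * G)) k' (by omega)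
      rw [map_sub, sub_eq_zero,
        mul_comm F (PowerSeries.derivative (MvPolynomial (Fin (i + 1)) ℤ) G),
        PowerSeries.coeff_mul, PowerSeries.coeff_mul] at hc0
      have h2 : ∑ p ∈ Finset.HasAntidiagonal.antidiagonal k',
          (PowerSeries.coeff p.1 (PowerSeries.derivative (MvPolynomial (Fin (i + 1)) ℤ) F)
              * PowerSeries.coeff p.2 G
            - PowerSeries.coeff p.1 (PowerSeries.derivative (MvPolynomial (Fin (i + 1)) ℤ) G)
              * PowerSeries.coeff p.2 F) = 0 := by
        rw [Finset.sum_sub_distrib, hc0, sub_self]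
      rw [Finset.sum_eq_single_of_mem (k', 0) (by simp)] at h2
      · dsimp only at h2
        rw [PowerSeries.coeff_derivative, PowerSeries.coeff_derivative, hF0, hG0] at h2
        have h3 : (PowerSeries.coeff (R := MvPolynomial (Fin (i + 1)) ℤ) (k' + 1) F
              - PowerSeries.coeff (R := MvPolynomial (Fin (i + 1)) ℤ) (k' + 1) G)
            * ((k' : MvPolynomial (Fin (i + 1)) ℤ) + 1) = 0 := by linear_combination h2
        rcases mul_eq_zero.1 h3 with h4 | h4
        · exact sub_eq_zero.1 h4
        · exact absurd h4 (Nat.cast_add_one_ne_zero k')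
      · rintro ⟨a, b⟩ hp hne
        have hp' : a + b = k' := Finset.HasAntidiagonal.mem_antidiagonal.1 hp
        have hb : b ≠ 0 := by
          rintro rfl
          simp only [ne_eq, Prod.mk.injEq, and_true] at hne
          omega
        dsimp only
        rw [PowerSeries.coeff_derivative, PowerSeries.coeff_derivative,
          IH (a + 1) (by omega) (by omega), IH b (by omega) (by omega)]
        ring
end

section
/- Let i ≥ 1 and let R = ℤ[X₀,…,X_{i−1}] be the multivariate polynomial ring in i variables (indexed by Fin i). For a subset S of the index set, write ℓ_S = Σ_{j∈S} X_j. In the formal power series ring R⟦t⟧, set F = ∏_{S : (i−|S|) even} (1 + ℓ_S·t) and G = ∏_{S : (i−|S|) odd} (1 + ℓ_S·t), where the products run over all subsets S of Fin i. Then G is a unit in R⟦t⟧ (its constant coefficient is 1), and the coefficient of t^i in F·G⁻¹ equals (−1)^{i−1}·(i−1)!·X₀·X₁⋯X_{i−1}. -/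
open Finset PowerSeries


lemma neg_one_pow_sub' {A : Type*} [Monoid A] [HasDistribNeg A] {a b : ℕ} (h : b ≤ a) :
    (-1 : A) ^ (a - b) = (-1) ^ a * (-1) ^ b := by
  have h2 : ((-1 : A) ^ b) * ((-1) ^ b) = 1 := by
    rw [← pow_add]; exact Even.neg_one_pow ⟨b, rfl⟩
  calc (-1 : A) ^ (a - b) = (-1)^(a-b) * ((-1)^b * (-1)^b) := by rw [h2, mul_one]
    _ = ((-1)^(a-b) * (-1)^b) * (-1)^b := by rw [mul_assoc]
    _ = (-1)^a * (-1)^b := by rw [← pow_add, Nat.sub_add_cancel h]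

lemma signsum {α : Type*} [Fintype α] [DecidableEq α] (R : Finset α) :
    ∑ S ∈ Finset.univ.filter (fun S => R ⊆ S), (-1:ℤ)^(Fintype.card α - S.card)
      = if R = Finset.univ then 1 else 0 := by
  rw [Finset.sum_nbij' (i := fun S => S \ R) (j := fun T => R ∪ T)
    (t := Rᶜ.powerset) (g := fun T => (-1:ℤ)^(Fintype.card α - (R.card + T.card)))]
  · have hc : Rᶜ.card = Fintype.card α - R.card := by
      rw [Finset.card_compl]
    rcases eq_or_ne R Finset.univ with h | h
    · simp [h]
    · rw [if_neg h]
      have : ∀ T ∈ Rᶜ.powerset, (-1:ℤ)^(Fintype.card α - (R.card + T.card))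
          = (-1)^(Fintype.card α - R.card) * (-1)^T.card := by
        intro T hT
        rw [← Nat.sub_sub, neg_one_pow_sub']
        rw [← hc]
        exact Finset.card_le_card (Finset.mem_powerset.mp hT)
      rw [Finset.sum_congr rfl this, ← Finset.mul_sum,
        Finset.sum_powerset_neg_one_pow_card, if_neg, mul_zero]
      intro hh
      exact h (by simpa [Finset.compl_eq_empty_iff] using hh)
  · intro S hS
    simp only [Finset.mem_filter, Finset.mem_univ, true_and] at hS
    simp only [Finset.mem_powerset]
    intro x hx
    simp only [Finset.mem_sdiff] at hx
    simp [hx.2]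
  · intro T hT
    simp
  · intro S hS
    simp only [Finset.mem_filter, Finset.mem_univ, true_and] at hS
    exact Finset.union_sdiff_of_subset hS
  · intro T hT
    simp only [Finset.mem_powerset] at hT
    rw [Finset.union_sdiff_cancel_left]
    rw [Finset.disjoint_left]
    intro a ha hT2
    exact (Finset.mem_compl.mp (hT hT2)) ha
  · intro S hS
    simp only [Finset.mem_filter, Finset.mem_univ, true_and] at hS
    have h1 := Finset.card_le_card hS
    have h2 := Finset.card_sdiff_of_subset hS
    congr 1
    omega

lemma powsum (i m : ℕ) (hm : m ≤ i) :
    ∑ S : Finset (Fin i), (-1 : MvPolynomial (Fin i) ℤ)^(i - S.card)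
        * (∑ j ∈ S, MvPolynomial.X j)^m
      = if m = i then (Nat.factorial i : MvPolynomial (Fin i) ℤ) * ∏ j, MvPolynomial.X j
        else 0 := by
  classical
  have hpi : ∀ S : Finset (Fin i), Fintype.piFinset (fun _ : Fin m => S)
      = Finset.univ.filter (fun p : Fin m → Fin i => ∀ k, p k ∈ S) := by
    intro S; ext p; simp [Fintype.mem_piFinset]
  calc
    ∑ S : Finset (Fin i), (-1 : MvPolynomial (Fin i) ℤ)^(i - S.card)
        * (∑ j ∈ S, MvPolynomial.X j)^m
      = ∑ S : Finset (Fin i), ∑ p : Fin m → Fin i,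
          (if ∀ k, p k ∈ S then
            (-1 : MvPolynomial (Fin i) ℤ)^(i - S.card) * ∏ k, MvPolynomial.X (p k) else 0) := by
        refine Finset.sum_congr rfl (fun S _ => ?_)
        rw [Finset.sum_pow', hpi S, Finset.sum_filter, Finset.mul_sum]
        exact Finset.sum_congr rfl (fun p _ => by split_ifs <;> simp
          )
    _ = ∑ p : Fin m → Fin i, ∑ S : Finset (Fin i),
          (if ∀ k, p k ∈ S then
            (-1 : MvPolynomial (Fin i) ℤ)^(i - S.card) * ∏ k, MvPolynomial.X (p k) else 0) :=
        Finset.sum_comm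
    _ = ∑ p : Fin m → Fin i,
          (if Finset.image p Finset.univ = Finset.univ then (1:MvPolynomial (Fin i) ℤ) else 0)
            * ∏ k, MvPolynomial.X (p k) := by
        refine Finset.sum_congr rfl (fun p _ => ?_)
        have hcond : ∀ S : Finset (Fin i), (∀ k, p k ∈ S) ↔ Finset.image p Finset.univ ⊆ S := by
          intro S; rw [Finset.image_subset_iff]; simp
        calc ∑ S : Finset (Fin i), (if ∀ k, p k ∈ S then
            (-1 : MvPolynomial (Fin i) ℤ)^(i - S.card) * ∏ k, MvPolynomial.X (p k) else 0)
            = ∑ S ∈ Finset.univ.filter (fun S => Finset.image p Finset.univ ⊆ S),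
              (-1 : MvPolynomial (Fin i) ℤ)^(i - S.card) * ∏ k, MvPolynomial.X (p k) := by
              rw [Finset.sum_filter]
              exact Finset.sum_congr rfl (fun S _ => by simp only [hcond])
          _ = (∑ S ∈ Finset.univ.filter (fun S => Finset.image p Finset.univ ⊆ S),
              (-1 : MvPolynomial (Fin i) ℤ)^(i - S.card)) * ∏ k, MvPolynomial.X (p k) := by
              rw [Finset.sum_mul]
          _ = _ := by
              have : (∑ S ∈ Finset.univ.filter (fun S => Finset.image p Finset.univ ⊆ S),
                  (-1 : MvPolynomial (Fin i) ℤ)^(i - S.card))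
                  = ((∑ S ∈ Finset.univ.filter (fun S => Finset.image p Finset.univ ⊆ S),
                    (-1 : ℤ)^(Fintype.card (Fin i) - S.card) : ℤ) : MvPolynomial (Fin i) ℤ) := by
                push_cast [Fintype.card_fin]
                rfl
              rw [this, signsum]
              split_ifs <;> simp
    _ = ∑ p ∈ Finset.univ.filter
          (fun p : Fin m → Fin i => Finset.image p Finset.univ = Finset.univ),
          ∏ k, MvPolynomial.X (p k) := by
        rw [Finset.sum_filter]
        exact Finset.sum_congr rfl (fun p _ => by split_ifs <;> simp)
    _ = _ := by
        rcases eq_or_lt_of_le hm with h | h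
    -- m = i case
        · subst h
          rw [if_pos rfl]
          have : ∑ p ∈ Finset.univ.filter
              (fun p : Fin m → Fin m => Finset.image p Finset.univ = Finset.univ),
              ∏ k, (MvPolynomial.X (p k) : MvPolynomial (Fin m) ℤ)
              = ∑ σ : Equiv.Perm (Fin m), ∏ k, (MvPolynomial.X (σ k) : MvPolynomial (Fin m) ℤ) := by
            refine (Finset.sum_bij (fun (σ : Equiv.Perm (Fin m)) _ => (σ : Fin m → Fin m))
              ?_ ?_ ?_ ?_).symm
            · intro σ _
              simp [Finset.image_univ_equiv]
            · intro σ _ τ _ h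
              exact Equiv.coe_fn_injective h
            · intro p hp
              simp only [Finset.mem_filter, Finset.mem_univ, true_and] at hp
              have hsurj : Function.Surjective p := by
                intro y
                have : y ∈ Finset.image p Finset.univ := by rw [hp]; exact Finset.mem_univ y
                rcases Finset.mem_image.mp this with ⟨x, _, hx⟩
                exact ⟨x, hx⟩
              exact ⟨Equiv.ofBijective p (Finite.surjective_iff_bijective.mp hsurj),
                Finset.mem_univ _, rfl⟩
            · intro σ _
              rfl
          rw [this]
          have : ∀ σ : Equiv.Perm (Fin m), ∏ k, MvPolynomial.X (σ k)
              = ∏ j, (MvPolynomial.X j : MvPolynomial (Fin m) ℤ) :=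
            fun σ => Equiv.prod_comp σ _
          rw [Finset.sum_congr rfl (fun σ _ => this σ), Finset.sum_const, Finset.card_univ,
            Fintype.card_perm, Fintype.card_fin, nsmul_eq_mul]
    -- m < i case
        · rw [if_neg (by omega)]
          rw [Finset.filter_false_of_mem, Finset.sum_empty]
          intro p _
          intro hp
          have h1 : (Finset.image p Finset.univ).card ≤ m := by
            calc (Finset.image p Finset.univ).card ≤ (Finset.univ : Finset (Fin m)).card :=
              Finset.card_image_le
            _ = m := by simp
          rw [hp] at h1
          simp at h1
          omega



lemma deriv_prod_s1 {R : Type*} [CommRing R] {ι : Type*} [DecidableEq ι] (s : Finset ι)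
    (f : ι → PowerSeries R) :
    PowerSeries.derivative R (∏ x ∈ s, f x)
      = ∑ x ∈ s, (∏ y ∈ s.erase x, f y) * PowerSeries.derivative R (f x) := by
  induction s using Finset.induction_on with
  | empty => simp
  | insert a s ha ih =>
    rw [Finset.prod_insert ha, Derivation.leibniz, smul_eq_mul, smul_eq_mul, ih,
      Finset.sum_insert ha, Finset.erase_insert ha, Finset.mul_sum]
    rw [add_comm]
    congr 1
    refine Finset.sum_congr rfl (fun x hx => ?_)
    have hax : a ≠ x := fun h => ha (h ▸ hx)
    rw [Finset.erase_insert_of_ne hax, Finset.prod_insert (fun h => ha (Finset.erase_subset _ _ h))]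
    ring

noncomputable def ff (i : ℕ) (S : Finset (Fin i)) : PowerSeries (MvPolynomial (Fin i) ℤ) :=
  1 + PowerSeries.C (∑ j ∈ S, MvPolynomial.X j) * PowerSeries.X

noncomputable def FF (i : ℕ) : PowerSeries (MvPolynomial (Fin i) ℤ) :=
  ∏ S ∈ Finset.univ.filter (fun S : Finset (Fin i) => Even (i - S.card)), ff i S

noncomputable def GG (i : ℕ) : PowerSeries (MvPolynomial (Fin i) ℤ) :=
  ∏ S ∈ Finset.univ.filter (fun S : Finset (Fin i) => Odd (i - S.card)), ff i S

noncomputable def PP (i : ℕ) : PowerSeries (MvPolynomial (Fin i) ℤ) :=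
  ∏ S : Finset (Fin i), ff i S

noncomputable def PPe (i : ℕ) (S : Finset (Fin i)) : PowerSeries (MvPolynomial (Fin i) ℤ) :=
  ∏ T ∈ Finset.univ.erase S, ff i T

lemma const_ff (i : ℕ) (S : Finset (Fin i)) : PowerSeries.constantCoeff (R := MvPolynomial (Fin i) ℤ) (ff i S) = 1 := by
  simp [ff]

lemma ff_ne_zero (i : ℕ) (S : Finset (Fin i)) : ff i S ≠ 0 := fun h => by
  have := const_ff i S
  rw [h, map_zero] at this
  exact one_ne_zero this.symm

lemma const_FF (i : ℕ) : PowerSeries.constantCoeff (R := MvPolynomial (Fin i) ℤ) (FF i) = 1 := by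
  rw [FF, map_prod]
  exact Finset.prod_eq_one (fun S _ => const_ff i S)

lemma const_GG (i : ℕ) : PowerSeries.constantCoeff (R := MvPolynomial (Fin i) ℤ) (GG i) = 1 := by
  rw [GG, map_prod]
  exact Finset.prod_eq_one (fun S _ => const_ff i S)

lemma const_PP (i : ℕ) : PowerSeries.constantCoeff (R := MvPolynomial (Fin i) ℤ) (PP i) = 1 := by
  rw [PP, map_prod]
  exact Finset.prod_eq_one (fun S _ => const_ff i S)

lemma odd_filter (i : ℕ) :
    Finset.univ.filter (fun S : Finset (Fin i) => Odd (i - S.card))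
      = Finset.univ.filter (fun S : Finset (Fin i) => ¬ Even (i - S.card)) :=
  Finset.filter_congr (fun S _ => by rw [← Nat.not_even_iff_odd])

lemma FF_mul_GG (i : ℕ) : FF i * GG i = PP i := by
  rw [FF, GG, PP, odd_filter]
  exact Finset.prod_filter_mul_prod_filter_not _ _ _

lemma ff_mul_PPe (i : ℕ) (S : Finset (Fin i)) : ff i S * PPe i S = PP i := by
  rw [PPe, PP]
  exact Finset.mul_prod_erase _ _ (Finset.mem_univ S)

lemma deriv_ff (i : ℕ) (S : Finset (Fin i)) :
    PowerSeries.derivative (MvPolynomial (Fin i) ℤ) (ff i S) = PowerSeries.C (∑ j ∈ S, MvPolynomial.X j) := by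
  unfold ff
  rw [map_add, Derivation.leibniz, PowerSeries.derivative_X, PowerSeries.derivative_C]
  simp

lemma prodE_mul_GG (i : ℕ) (S : Finset (Fin i)) (hS : Even (i - S.card)) :
    (∏ T ∈ (Finset.univ.filter (fun S : Finset (Fin i) => Even (i - S.card))).erase S, ff i T)
      * GG i = PPe i S := by
  have h0 : ff i S * ((∏ T ∈ (Finset.univ.filter
      (fun S : Finset (Fin i) => Even (i - S.card))).erase S, ff i T) * GG i)
      = ff i S * PPe i S := by
    rw [ff_mul_PPe, ← mul_assoc, Finset.mul_prod_erase _ _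
      (by simp [hS] : S ∈ Finset.univ.filter (fun S : Finset (Fin i) => Even (i - S.card))),
      ← FF, FF_mul_GG]
  exact mul_left_cancel₀ (ff_ne_zero i S) h0

lemma prodO_mul_FF (i : ℕ) (S : Finset (Fin i)) (hS : Odd (i - S.card)) :
    (∏ T ∈ (Finset.univ.filter (fun S : Finset (Fin i) => Odd (i - S.card))).erase S, ff i T)
      * FF i = PPe i S := by
  have h0 : ff i S * ((∏ T ∈ (Finset.univ.filter
      (fun S : Finset (Fin i) => Odd (i - S.card))).erase S, ff i T) * FF i)
      = ff i S * PPe i S := by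
    rw [ff_mul_PPe, ← mul_assoc, Finset.mul_prod_erase _ _
      (by simp [hS] : S ∈ Finset.univ.filter (fun S : Finset (Fin i) => Odd (i - S.card))),
      ← GG, mul_comm (GG i) (FF i), FF_mul_GG]
  exact mul_left_cancel₀ (ff_ne_zero i S) h0

set_option maxHeartbeats 1000000 in
lemma Q_eq (i : ℕ) :
    PowerSeries.derivative (MvPolynomial (Fin i) ℤ) (FF i) * GG i - FF i * PowerSeries.derivative (MvPolynomial (Fin i) ℤ) (GG i)
      = (∑ S ∈ Finset.univ.filter (fun S : Finset (Fin i) => Even (i - S.card)),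
          PowerSeries.C (∑ j ∈ S, MvPolynomial.X j) * PPe i S)
        - ∑ S ∈ Finset.univ.filter (fun S : Finset (Fin i) => Odd (i - S.card)),
          PowerSeries.C (∑ j ∈ S, MvPolynomial.X j) * PPe i S := by
  rw [FF, GG, deriv_prod_s1, deriv_prod_s1, Finset.sum_mul, Finset.mul_sum]
  rw [← FF, ← GG]
  refine congrArg₂ (· - ·) ?_ ?_
  · refine Finset.sum_congr rfl (fun S hS => ?_)
    simp only [Finset.mem_filter, Finset.mem_univ, true_and] at hS
    rw [deriv_ff, ← prodE_mul_GG i S hS]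
    ring
  · refine Finset.sum_congr rfl (fun S hS => ?_)
    simp only [Finset.mem_filter, Finset.mem_univ, true_and] at hS
    rw [deriv_ff, ← prodO_mul_FF i S hS]
    ring

noncomputable def cc (i : ℕ) (S : Finset (Fin i)) : PowerSeries (MvPolynomial (Fin i) ℤ) :=
  PowerSeries.C (∑ j ∈ S, MvPolynomial.X j)

noncomputable def TT (i : ℕ) (S : Finset (Fin i)) : PowerSeries (MvPolynomial (Fin i) ℤ) :=
  ∑ k ∈ Finset.range i, (-1)^k * (cc i S)^(k+1) * PowerSeries.X^k

lemma geom_aux {R : Type*} [CommRing R] (c : PowerSeries R) (i : ℕ) :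
    (∑ k ∈ Finset.range i, (-1 : PowerSeries R)^k * c^(k+1) * (PowerSeries.X)^k)
      * (1 + c * PowerSeries.X)
      = c - (-1)^i * c^(i+1) * (PowerSeries.X)^i := by
  have hsum : (∑ k ∈ Finset.range i, (-1 : PowerSeries R)^k * c^(k+1) * (PowerSeries.X)^k)
      = c * ∑ k ∈ Finset.range i, (-(c * PowerSeries.X))^k := by
    rw [Finset.mul_sum]
    refine Finset.sum_congr rfl (fun k _ => ?_)
    have hk : (-(c * PowerSeries.X))^k = (-1:PowerSeries R)^k * (c^k * PowerSeries.X^k) := by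
      rw [neg_pow (c * PowerSeries.X) k, mul_pow]
    rw [hk]; ring
  have h := geom_sum_mul (-(c * PowerSeries.X)) i
  have hx : (-(c * PowerSeries.X))^i = (-1:PowerSeries R)^i * c^i * PowerSeries.X^i := by
    rw [neg_pow (c * PowerSeries.X) i, mul_pow]; ring
  rw [hsum]
  linear_combination (-c) * h + c * hx

lemma key_i (i : ℕ) (S : Finset (Fin i)) :
    cc i S * PPe i S = TT i S * PP i
      + (-1)^i * (cc i S)^(i+1) * PowerSeries.X^i * PPe i S := by
  have h1 : TT i S * PP i
      = (cc i S - (-1)^i * (cc i S)^(i+1) * PowerSeries.X^i) * PPe i S := by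
    rw [← ff_mul_PPe i S, ← mul_assoc, show ff i S = 1 + cc i S * PowerSeries.X from rfl,
      TT, geom_aux]
  linear_combination -h1

lemma EOtoSigned (i m : ℕ) :
    (∑ S ∈ Finset.univ.filter (fun S : Finset (Fin i) => Even (i - S.card)),
        (∑ j ∈ S, MvPolynomial.X j)^m)
      - (∑ S ∈ Finset.univ.filter (fun S : Finset (Fin i) => Odd (i - S.card)),
        (∑ j ∈ S, MvPolynomial.X j)^m)
      = ∑ S : Finset (Fin i),
          (-1 : MvPolynomial (Fin i) ℤ)^(i - S.card) * (∑ j ∈ S, MvPolynomial.X j)^m := by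
  rw [odd_filter,
    ← Finset.sum_filter_add_sum_filter_not Finset.univ (fun S : Finset (Fin i) => Even (i - S.card))
      (fun S : Finset (Fin i) =>
        (-1 : MvPolynomial (Fin i) ℤ)^(i - S.card) * (∑ j ∈ S, MvPolynomial.X j)^m)]
  rw [sub_eq_add_neg]
  congr 1
  · refine Finset.sum_congr rfl (fun S hS => ?_)
    simp only [Finset.mem_filter, Finset.mem_univ, true_and] at hS
    rw [hS.neg_one_pow, one_mul]
  · rw [← Finset.sum_neg_distrib]
    refine Finset.sum_congr rfl (fun S hS => ?_)
    simp only [Finset.mem_filter, Finset.mem_univ, true_and] at hS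
    rw [(Nat.not_even_iff_odd.mp hS).neg_one_pow]
    ring

lemma TT_sum (i : ℕ) (hi : 1 ≤ i) :
    (∑ S ∈ Finset.univ.filter (fun S : Finset (Fin i) => Even (i - S.card)), TT i S)
      - (∑ S ∈ Finset.univ.filter (fun S : Finset (Fin i) => Odd (i - S.card)), TT i S)
      = PowerSeries.C ((-1)^(i-1) * (Nat.factorial i : MvPolynomial (Fin i) ℤ)
          * ∏ j, MvPolynomial.X j) * PowerSeries.X^(i-1) := by
  have swap : ∀ (A : Finset (Finset (Fin i))), ∑ S ∈ A, TT i S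
      = ∑ k ∈ Finset.range i,
          (-1)^k * (∑ S ∈ A, (cc i S)^(k+1)) * PowerSeries.X^k := by
    intro A
    simp only [TT]
    rw [Finset.sum_comm]
    refine Finset.sum_congr rfl (fun k _ => ?_)
    simp only [Finset.mul_sum, Finset.sum_mul]
  rw [swap, swap, ← Finset.sum_sub_distrib]
  have hterm : ∀ k ∈ Finset.range i,
      (-1)^k * (∑ S ∈ Finset.univ.filter (fun S : Finset (Fin i) => Even (i - S.card)),
          (cc i S)^(k+1)) * PowerSeries.X^k
        - (-1)^k * (∑ S ∈ Finset.univ.filter (fun S : Finset (Fin i) => Odd (i - S.card)),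
          (cc i S)^(k+1)) * PowerSeries.X^k
      = (-1)^k * PowerSeries.C
          (if k+1 = i then (Nat.factorial i : MvPolynomial (Fin i) ℤ) * ∏ j, MvPolynomial.X j
            else 0) * PowerSeries.X^k := by
    intro k hk
    rw [Finset.mem_range] at hk
    have hC : ∀ (A : Finset (Finset (Fin i))), ∑ S ∈ A, (cc i S)^(k+1)
        = PowerSeries.C (∑ S ∈ A, (∑ j ∈ S, MvPolynomial.X j)^(k+1)) := by
      intro A
      rw [map_sum]
      exact Finset.sum_congr rfl (fun S _ => by rw [cc, map_pow])
    rw [hC, hC, ← powsum i (k+1) (by omega), ← EOtoSigned i (k+1), map_sub]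
    ring
  rw [Finset.sum_congr rfl hterm]
  rw [Finset.sum_eq_single_of_mem (i-1) (Finset.mem_range.mpr (by omega))]
  · rw [if_pos (by omega)]
    simp only [map_mul, map_pow, map_neg, map_one]
    ring
  · intro k hk hne
    rw [Finset.mem_range] at hk
    rw [if_neg (by omega), map_zero]
    ring

lemma Q_rep (i : ℕ) (hi : 1 ≤ i) :
    ∃ Rem : PowerSeries (MvPolynomial (Fin i) ℤ),
    PowerSeries.derivative (MvPolynomial (Fin i) ℤ) (FF i) * GG i
        - FF i * PowerSeries.derivative (MvPolynomial (Fin i) ℤ) (GG i)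
      = PowerSeries.C ((-1)^(i-1) * (Nat.factorial i : MvPolynomial (Fin i) ℤ)
          * ∏ j, MvPolynomial.X j) * PowerSeries.X^(i-1) * PP i
        + PowerSeries.X^i * Rem := by
  refine ⟨(∑ S ∈ Finset.univ.filter (fun S : Finset (Fin i) => Even (i - S.card)),
      (-1)^i * (cc i S)^(i+1) * PPe i S)
    - ∑ S ∈ Finset.univ.filter (fun S : Finset (Fin i) => Odd (i - S.card)),
      (-1)^i * (cc i S)^(i+1) * PPe i S, ?_⟩
  rw [Q_eq i]
  have hsum : ∀ (A : Finset (Finset (Fin i))),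
      ∑ S ∈ A, PowerSeries.C (∑ j ∈ S, MvPolynomial.X j) * PPe i S
        = (∑ S ∈ A, TT i S) * PP i
          + PowerSeries.X^i * ∑ S ∈ A, (-1)^i * (cc i S)^(i+1) * PPe i S := by
    intro A
    rw [Finset.sum_mul, Finset.mul_sum, ← Finset.sum_add_distrib]
    refine Finset.sum_congr rfl (fun S _ => ?_)
    have := key_i i S
    rw [show PowerSeries.C (R := MvPolynomial (Fin i) ℤ) (∑ j ∈ S, MvPolynomial.X j) = cc i S from rfl,
      this]
    ring
  rw [hsum, hsum]
  have hTT := TT_sum i hi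
  linear_combination PP i * hTT

lemma coeffQ (i : ℕ) (hi : 1 ≤ i) (n : ℕ) (h1 : 1 ≤ n) (hn : n ≤ i) :
    PowerSeries.coeff (R := MvPolynomial (Fin i) ℤ) (n-1)
        (PowerSeries.derivative (MvPolynomial (Fin i) ℤ) (FF i) * GG i
          - FF i * PowerSeries.derivative (MvPolynomial (Fin i) ℤ) (GG i))
      = if n = i then (-1)^(i-1) * (Nat.factorial i : MvPolynomial (Fin i) ℤ)
          * ∏ j, MvPolynomial.X j else 0 := by
  obtain ⟨Rem, hQ⟩ := Q_rep i hi
  rw [hQ, map_add]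
  have hterm2 : PowerSeries.coeff (R := MvPolynomial (Fin i) ℤ) (n-1) (PowerSeries.X^i * Rem) = 0 := by
    rw [mul_comm, PowerSeries.coeff_mul_X_pow', if_neg (by omega)]
  have hterm1 : PowerSeries.C (R := MvPolynomial (Fin i) ℤ) ((-1)^(i-1)
        * (Nat.factorial i : MvPolynomial (Fin i) ℤ) * ∏ j, MvPolynomial.X j)
        * PowerSeries.X^(i-1) * PP i
      = PowerSeries.C (R := MvPolynomial (Fin i) ℤ) ((-1)^(i-1)
        * (Nat.factorial i : MvPolynomial (Fin i) ℤ) * ∏ j, MvPolynomial.X j)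
        * (PP i * PowerSeries.X^(i-1)) := by ring
  rw [hterm2, add_zero, hterm1, PowerSeries.coeff_C_mul, PowerSeries.coeff_mul_X_pow']
  rcases eq_or_ne n i with h | h
  · subst h
    rw [if_pos (le_refl _), if_pos rfl, Nat.sub_self, PowerSeries.coeff_zero_eq_constantCoeff,
      const_PP, mul_one]
  · rw [if_neg (by omega), if_neg h, mul_zero]

lemma delta_coeff (i : ℕ) (hi : 1 ≤ i) : ∀ n, n ≤ i →
    PowerSeries.coeff (R := MvPolynomial (Fin i) ℤ) n (FF i - GG i)
      = if n = i then (-1)^(i-1) * (Nat.factorial (i-1) : MvPolynomial (Fin i) ℤ)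
          * ∏ j, MvPolynomial.X j else 0 := by
  intro n
  induction n using Nat.strong_induction_on with
  | _ n IH =>
    intro hn
    match n, hn with
    | 0, hn =>
      rw [PowerSeries.coeff_zero_eq_constantCoeff, map_sub, const_FF, const_GG, sub_self,
        if_neg (by omega)]
    | (m+1), hn =>
      -- compute coeff m of Q in terms of coeff (m+1) of Delta
      have hrw : PowerSeries.derivative (MvPolynomial (Fin i) ℤ) (FF i) * GG i
          - FF i * PowerSeries.derivative (MvPolynomial (Fin i) ℤ) (GG i)
          = PowerSeries.derivative (MvPolynomial (Fin i) ℤ) (FF i - GG i) * GG i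
            - (FF i - GG i) * PowerSeries.derivative (MvPolynomial (Fin i) ℤ) (GG i) := by
        rw [map_sub]
        ring
      have hQc := coeffQ i hi (m+1) (by omega) hn
      rw [hrw] at hQc
      rw [Nat.add_sub_cancel] at hQc
      have hc1 : PowerSeries.coeff (R := MvPolynomial (Fin i) ℤ) m
          (PowerSeries.derivative (MvPolynomial (Fin i) ℤ) (FF i - GG i) * GG i)
          = PowerSeries.coeff (R := MvPolynomial (Fin i) ℤ) (m+1) (FF i - GG i) * (m+1) := by
        rw [PowerSeries.coeff_mul]
        rw [Finset.sum_eq_single_of_mem (m, 0) (Finset.HasAntidiagonal.mem_antidiagonal.mpr (by omega))]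
        · rw [PowerSeries.coeff_derivative, PowerSeries.coeff_zero_eq_constantCoeff, const_GG,
            mul_one]
        · intro p hp hne
          rw [Finset.HasAntidiagonal.mem_antidiagonal] at hp
          have hlt : p.1 < m := by
            rcases Nat.lt_or_ge p.1 m with h | h
            · exact h
            · exfalso; apply hne
              have : p.1 = m := by omega
              have : p.2 = 0 := by omega
              exact Prod.ext (by omega) this
          rw [PowerSeries.coeff_derivative, IH (p.1+1) (by omega) (by omega),
            if_neg (by omega)]
          ring
      have hc2 : PowerSeries.coeff (R := MvPolynomial (Fin i) ℤ) m
          ((FF i - GG i) * PowerSeries.derivative (MvPolynomial (Fin i) ℤ) (GG i)) = 0 := by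
        rw [PowerSeries.coeff_mul]
        refine Finset.sum_eq_zero (fun p hp => ?_)
        rw [Finset.HasAntidiagonal.mem_antidiagonal] at hp
        rw [IH p.1 (by omega) (by omega), if_neg (by omega), zero_mul]
      rw [map_sub, hc1, hc2, sub_zero] at hQc
      -- now conclude
      rcases eq_or_ne (m+1) i with h | h
      · rw [if_pos h]
        rw [if_pos h] at hQc
        have hcancel : ((m : MvPolynomial (Fin i) ℤ) + 1) ≠ 0 := by
          have h0 : ((m+1 : ℕ) : MvPolynomial (Fin i) ℤ) ≠ 0 := Nat.cast_ne_zero.mpr (by omega)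
          push_cast at h0
          exact h0
        apply mul_right_cancel₀ hcancel
        rw [hQc]
        have hfacN : Nat.factorial i = Nat.factorial (i-1) * (m+1) := by
          subst h
          simp [Nat.factorial_succ, Nat.mul_comm]
        have hfac : (Nat.factorial i : MvPolynomial (Fin i) ℤ)
            = (Nat.factorial (i-1) : MvPolynomial (Fin i) ℤ) * ((m : MvPolynomial (Fin i) ℤ) + 1) := by
          exact_mod_cast congrArg (Nat.cast : ℕ → MvPolynomial (Fin i) ℤ) hfacN
        rw [hfac]
        ring
      · rw [if_neg h]
        rw [if_neg h] at hQc
        have := mul_eq_zero.mp hQc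
        rcases this with h0 | h0
        · exact h0
        · exfalso
          have hcancel : ((m : MvPolynomial (Fin i) ℤ) + 1) ≠ 0 := by
            have h0' : ((m+1 : ℕ) : MvPolynomial (Fin i) ℤ) ≠ 0 := Nat.cast_ne_zero.mpr (by omega)
            push_cast at h0'
            exact h0'
          exact hcancel h0

/-- **Lemma (factor), splitting-principle form.**
For `i ≥ 1`, with one variable `X j` for each `j : Fin i` (the first Chern classes of the
invertible sheaves `L₁, …, Lᵢ`), set `ℓ_S = ∑_{j ∈ S} X j` for each subset `S`.
Let `F` be the product of `1 + ℓ_S·t` over subsets `S` with `i - |S|` even, and `G` the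
analogous product over subsets with `i - |S|` odd.  Then `G` is a unit of the power series
ring, and the coefficient of `t^i` in `F·G⁻¹` is `(-1)^(i-1)·(i-1)!·X₀⋯X_{i-1}`. -/
theorem stmt1 (i : ℕ) (hi : 1 ≤ i)
    (F G : PowerSeries (MvPolynomial (Fin i) ℤ))
    (hF : F = ∏ S ∈ Finset.univ.filter (fun S : Finset (Fin i) => Even (i - S.card)),
      (1 + PowerSeries.C (R := MvPolynomial (Fin i) ℤ) (∑ j ∈ S, MvPolynomial.X j) *
        PowerSeries.X))
    (hG : G = ∏ S ∈ Finset.univ.filter (fun S : Finset (Fin i) => Odd (i - S.card)),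
      (1 + PowerSeries.C (R := MvPolynomial (Fin i) ℤ) (∑ j ∈ S, MvPolynomial.X j) *
        PowerSeries.X)) :
    IsUnit G ∧
    ∀ H : PowerSeries (MvPolynomial (Fin i) ℤ), G * H = 1 →
      PowerSeries.coeff (R := MvPolynomial (Fin i) ℤ) i (F * H) =
        (-1) ^ (i - 1) * (Nat.factorial (i - 1) : MvPolynomial (Fin i) ℤ) *
          ∏ j : Fin i, MvPolynomial.X j := by
  have hg' : G = GG i := hG
  have hf' : F = FF i := hF
  constructor
  · rw [PowerSeries.isUnit_iff_constantCoeff, hg', const_GG]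
    exact isUnit_one
  · intro H hGH
    have hH0 : PowerSeries.constantCoeff (R := MvPolynomial (Fin i) ℤ) H = 1 := by
      have := congrArg (PowerSeries.constantCoeff (R := MvPolynomial (Fin i) ℤ)) hGH
      rw [map_mul, map_one, hg', const_GG, one_mul] at this
      exact this
    have hsplit : F * H = (FF i - GG i) * H + 1 := by
      rw [hf', sub_mul]
      rw [hg'] at hGH
      rw [hGH]
      ring
    rw [hsplit, map_add, PowerSeries.coeff_one, if_neg (by omega), add_zero]
    rw [PowerSeries.coeff_mul]
    rw [Finset.sum_eq_single_of_mem (i, 0) (Finset.HasAntidiagonal.mem_antidiagonal.mpr (by omega))]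
    · rw [PowerSeries.coeff_zero_eq_constantCoeff, hH0, mul_one,
        delta_coeff i hi i (le_refl i), if_pos rfl]
    · intro p hp hne
      rw [Finset.HasAntidiagonal.mem_antidiagonal] at hp
      have hlt : p.1 < i := by
        rcases Nat.lt_or_ge p.1 i with h | h
        · exact h
        · exfalso; exact hne (Prod.ext (by omega) (by omega))
      rw [delta_coeff i hi p.1 (by omega), if_neg (by omega), zero_mul]
end

section
/- Let R be a commutative ring, let x₁,…,x_n and y be elements of R, and let j ≥ 1. Then the j-th elementary symmetric polynomial of the shifted family satisfies e_j(x₁+y, x₂+y, …, x_n+y) = Σ_{i=0}^{j} C(n−i, j−i) · e_i(x₁,…,x_n) · y^{j−i}, where C(a,b) denotes the binomial coefficient (taken to be 0 when b > a) and e_i denotes the i-th elementary symmetric polynomial in n variables (with e₀ = 1). -/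
open Finset

lemma card_supersets {n j : ℕ} (T : Finset (Fin n)) (hT : T.card ≤ j) :
    ((Finset.powersetCard j (Finset.univ : Finset (Fin n))).filter (fun S => T ⊆ S)).card
    = Nat.choose (n - T.card) (j - T.card) := by
  classical
  have hc : n - T.card = ((Finset.univ : Finset (Fin n)) \ T).card := by
    rw [Finset.card_sdiff_of_subset (Finset.subset_univ T), Finset.card_univ, Fintype.card_fin]
  rw [hc, ← Finset.card_powersetCard (j - T.card) ((Finset.univ : Finset (Fin n)) \ T)]
  apply Finset.card_bij' (fun S _ => S \ T) (fun U _ => T ∪ U)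
  · intro S hS
    simp only [mem_filter, mem_powersetCard] at hS
    obtain ⟨⟨hSu, hScard⟩, hTS⟩ := hS
    simp only [mem_powersetCard]
    constructor
    · exact sdiff_subset_sdiff hSu (le_refl T)
    · rw [Finset.card_sdiff_of_subset hTS, hScard]
  · intro U hU
    simp only [mem_powersetCard] at hU
    obtain ⟨hUsub, hUcard⟩ := hU
    have hdisj : Disjoint T U := by
      have := hUsub.trans (Finset.sdiff_subset)
      exact Finset.disjoint_left.mpr (fun a haT haU =>
        (Finset.mem_sdiff.mp (hUsub haU)).2 haT)
    simp only [mem_filter, mem_powersetCard]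
    refine ⟨⟨Finset.subset_univ _, ?_⟩, Finset.subset_union_left⟩
    rw [Finset.card_union_of_disjoint hdisj, hUcard]
    omega
  · intro S hS
    simp only [mem_filter, mem_powersetCard] at hS
    exact Finset.union_sdiff_of_subset hS.2
  · intro U hU
    simp only [mem_powersetCard] at hU
    have hdisj : Disjoint T U := Finset.disjoint_left.mpr (fun a haT haU =>
        (Finset.mem_sdiff.mp (hU.1 haU)).2 haT)
    rw [Finset.union_sdiff_cancel_left hdisj]

lemma card_supersets_gt {n j : ℕ} (T : Finset (Fin n)) (hT : j < T.card) :
    ((Finset.powersetCard j (Finset.univ : Finset (Fin n))).filter (fun S => T ⊆ S)).card = 0 := by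
  rw [Finset.card_eq_zero]
  ext S
  simp only [mem_filter, mem_powersetCard, Finset.notMem_empty, iff_false]
  rintro ⟨⟨-, hcard⟩, hTS⟩
  have := Finset.card_le_card hTS
  omega

/-- **Example (line), splitting-principle form** (c.f. Fulton, Example 3.2.2).
For elements `x₁,…,x_n` and `y` of a commutative ring `R` and `j ≥ 1`, the `j`-th elementary
symmetric polynomial of the shifted family satisfies
`e_j(x₁+y,…,x_n+y) = ∑_{i=0}^{j} C(n-i, j-i) · e_i(x₁,…,x_n) · y^(j-i)`,
where `e_i` is realized as the sum over `i`-element subsets of products. -/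
theorem stmt3 {R : Type*} [CommRing R] (n : ℕ) (x : Fin n → R) (y : R) (j : ℕ) (hj : 1 ≤ j) :
    (∑ S ∈ Finset.powersetCard j (Finset.univ : Finset (Fin n)), ∏ a ∈ S, (x a + y)) =
      ∑ i ∈ Finset.range (j + 1),
        (Nat.choose (n - i) (j - i) : R) *
          (∑ S ∈ Finset.powersetCard i (Finset.univ : Finset (Fin n)), ∏ a ∈ S, x a) *
          y ^ (j - i) := by
  classical
  -- step 1: expand each product
  have step1 : (∑ S ∈ Finset.powersetCard j (Finset.univ : Finset (Fin n)), ∏ a ∈ S, (x a + y))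
      = ∑ S ∈ Finset.powersetCard j (Finset.univ : Finset (Fin n)),
          ∑ T ∈ S.powerset, (∏ a ∈ T, x a) * y ^ (j - T.card) := by
    refine Finset.sum_congr rfl fun S hS => ?_
    rw [Finset.prod_add]
    refine Finset.sum_congr rfl fun T hT => ?_
    rw [Finset.mem_powersetCard] at hS
    rw [Finset.mem_powerset] at hT
    rw [Finset.prod_const, Finset.card_sdiff_of_subset hT, hS.2]
  -- step 2: swap sums
  have step2 : (∑ S ∈ Finset.powersetCard j (Finset.univ : Finset (Fin n)),
          ∑ T ∈ S.powerset, (∏ a ∈ T, x a) * y ^ (j - T.card))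
      = ∑ T ∈ (Finset.univ : Finset (Fin n)).powerset,
          ((Finset.powersetCard j (Finset.univ : Finset (Fin n))).filter (fun S => T ⊆ S)).card
            * ((∏ a ∈ T, x a) * y ^ (j - T.card)) := by
    rw [Finset.sum_comm' (t' := (Finset.univ : Finset (Fin n)).powerset)
      (s' := fun T => (Finset.powersetCard j (Finset.univ : Finset (Fin n))).filter (fun S => T ⊆ S))]
    · exact Finset.sum_congr rfl fun T _ => by rw [Finset.sum_const, nsmul_eq_mul]
    · intro S T
      simp only [Finset.mem_filter, Finset.mem_powerset, Finset.mem_powersetCard]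
      constructor
      · rintro ⟨hS, hTS⟩; exact ⟨⟨hS, hTS⟩, Finset.subset_univ T⟩
      · rintro ⟨⟨hS, hTS⟩, -⟩; exact ⟨hS, hTS⟩
  rw [step1, step2, Finset.sum_powerset]
  rw [Finset.card_univ, Fintype.card_fin]
  -- step 3: per-cardinality
  have step3 : ∀ i, (∑ T ∈ Finset.powersetCard i (Finset.univ : Finset (Fin n)),
        (((Finset.powersetCard j (Finset.univ : Finset (Fin n))).filter (fun S => T ⊆ S)).card : R)
          * ((∏ a ∈ T, x a) * y ^ (j - T.card)))
      = (if i ≤ j then (Nat.choose (n - i) (j - i) : R) else 0) *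
          (∑ S ∈ Finset.powersetCard i (Finset.univ : Finset (Fin n)), ∏ a ∈ S, x a) * y ^ (j - i) := by
    intro i
    rw [Finset.mul_sum, Finset.sum_mul]
    refine Finset.sum_congr rfl fun T hT => ?_
    rw [Finset.mem_powersetCard] at hT
    by_cases h : i ≤ j
    · rw [if_pos h, card_supersets T (by omega), hT.2]
      ring
    · rw [if_neg h, card_supersets_gt T (by omega), hT.2]
      simp
  -- combine: both sums equal the sum over range (min j n + 1)
  calc ∑ i ∈ Finset.range (n + 1),
        ∑ T ∈ Finset.powersetCard i (Finset.univ : Finset (Fin n)),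
          (((Finset.powersetCard j (Finset.univ : Finset (Fin n))).filter (fun S => T ⊆ S)).card : R)
            * ((∏ a ∈ T, x a) * y ^ (j - T.card))
      = ∑ i ∈ Finset.range (n + 1),
          (if i ≤ j then (Nat.choose (n - i) (j - i) : R) else 0) *
            (∑ S ∈ Finset.powersetCard i (Finset.univ : Finset (Fin n)), ∏ a ∈ S, x a) * y ^ (j - i) :=
        Finset.sum_congr rfl fun i _ => step3 i
    _ = ∑ i ∈ Finset.range (min j n + 1),
          (Nat.choose (n - i) (j - i) : R) *
            (∑ S ∈ Finset.powersetCard i (Finset.univ : Finset (Fin n)), ∏ a ∈ S, x a) * y ^ (j - i) := by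
        rw [← Finset.sum_subset (Finset.range_subset_range.mpr (by omega : min j n + 1 ≤ n + 1))]
        · refine Finset.sum_congr rfl fun i hi => ?_
          rw [Finset.mem_range] at hi
          rw [if_pos (by omega)]
        · intro i hi hni
          rw [Finset.mem_range] at hi
          rw [Finset.mem_range, not_lt] at hni
          rw [if_neg (by omega), zero_mul, zero_mul]
    _ = ∑ i ∈ Finset.range (j + 1),
          (Nat.choose (n - i) (j - i) : R) *
            (∑ S ∈ Finset.powersetCard i (Finset.univ : Finset (Fin n)), ∏ a ∈ S, x a) * y ^ (j - i) := by
        rw [Finset.sum_subset (Finset.range_subset_range.mpr (by omega : min j n + 1 ≤ j + 1))]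
        intro i hi hni
        rw [Finset.mem_range] at hi
        rw [Finset.mem_range, not_lt] at hni
        have : (Finset.powersetCard i (Finset.univ : Finset (Fin n))) = ∅ := by
          rw [Finset.powersetCard_eq_empty, Finset.card_univ, Fintype.card_fin]; omega
        rw [this, Finset.sum_empty, mul_zero, zero_mul]
end

section
/- Let R be a commutative ring, let i ≥ 1, let u ∈ R, and let f ∈ R⟦t⟧ be a formal power series with constant coefficient 1 whose coefficients of t^k vanish for all 1 ≤ k ≤ i−1. Write a_i for the coefficient of t^i in f. The power series τ = t·(1+u·t)⁻¹ has zero constant coefficient, so the substitution f(τ) is well-defined, and f is a unit in R⟦t⟧. Set g = f(τ)·f(t)⁻¹. Then: (a) the coefficient of t^k in g vanishes for all 1 ≤ k ≤ i, and (b) the coefficient of t^{i+1} in g equals −i·u·a_i (where i denotes the image of the integer i in R). -/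
/-- Substitution of a power series `τ` with zero constant coefficient into a power series
`f`: the coefficient of `t^m` in `f(τ)` is `∑_{k=0}^m (coeff k f) · (coeff m (τ^k))`
(the terms with `k > m` vanish when the constant coefficient of `τ` is zero). -/
noncomputable def PowerSeries.substAt {R : Type*} [CommRing R] (τ f : PowerSeries R) :
    PowerSeries R :=
  PowerSeries.mk fun m =>
    ∑ k ∈ Finset.range (m + 1),
      PowerSeries.coeff k f * PowerSeries.coeff m (τ ^ k)

lemma aux_coeff_one_mul {R : Type*} [CommRing R] (φ ψ : PowerSeries R) :
    PowerSeries.coeff 1 (φ * ψ) =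
      PowerSeries.coeff 0 φ * PowerSeries.coeff 1 ψ +
      PowerSeries.coeff 1 φ * PowerSeries.coeff 0 ψ := by
  rw [PowerSeries.coeff_mul]
  rw [show (1:ℕ) = 0 + 1 from rfl, Finset.Nat.antidiagonal_succ']
  simp [Finset.sum_insert, Prod.map]
  ring

lemma aux_coeff_one_pow {R : Type*} [CommRing R] (w : PowerSeries R)
    (h0 : PowerSeries.constantCoeff w = 1) (n : ℕ) :
    PowerSeries.coeff 1 (w ^ n) = (n : R) * PowerSeries.coeff 1 w := by
  induction n with
  | zero => simp
  | succ n ih =>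
    rw [pow_succ, aux_coeff_one_mul, ih]
    simp [PowerSeries.coeff_zero_eq_constantCoeff, h0, map_pow]
    ring

/-- coefficient of `(X*w)^k`. -/
lemma aux_coeff_Xw_pow {R : Type*} [CommRing R] (w : PowerSeries R) (k p : ℕ) :
    PowerSeries.coeff p ((PowerSeries.X * w) ^ k) =
      if k ≤ p then PowerSeries.coeff (p - k) (w ^ k) else 0 := by
  rw [mul_pow, PowerSeries.coeff_X_pow_mul']

/-- **Core power-series computation for Lemmas (vanishing) and (factor).**
Let `f ∈ R⟦t⟧` have constant coefficient `1` and vanishing coefficients of `t^k` for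
`1 ≤ k ≤ i-1`, and let `a_i` be its coefficient of `t^i`.  Then `1 + u·t` and `f` are units;
for any inverse `w` of `1 + u·t` the series `τ = t·w = t·(1+u·t)⁻¹` has zero constant
coefficient (so `f(τ)` makes sense), and for any inverse `h` of `f`, the series
`g = f(τ)·f⁻¹` has vanishing coefficients of `t^k` for `1 ≤ k ≤ i`, and its coefficient of
`t^{i+1}` equals `-i·u·a_i`. -/
theorem stmt6 {R : Type*} [CommRing R] (i : ℕ) (hi : 1 ≤ i) (u : R) (f : PowerSeries R)
    (hf0 : PowerSeries.constantCoeff f = 1)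
    (hf : ∀ k, 1 ≤ k → k ≤ i - 1 → PowerSeries.coeff k f = 0) :
    IsUnit (1 + PowerSeries.C u * PowerSeries.X) ∧ IsUnit f ∧
    ∀ w : PowerSeries R, (1 + PowerSeries.C u * PowerSeries.X) * w = 1 →
      PowerSeries.constantCoeff (PowerSeries.X * w) = 0 ∧
      ∀ h : PowerSeries R, f * h = 1 →
        (∀ k, 1 ≤ k → k ≤ i →
          PowerSeries.coeff k (PowerSeries.substAt (PowerSeries.X * w) f * h) = 0) ∧
        PowerSeries.coeff (i + 1) (PowerSeries.substAt (PowerSeries.X * w) f * h) =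
          -(i : R) * u * PowerSeries.coeff i f := by
  refine ⟨?_, ?_, ?_⟩
  · rw [PowerSeries.isUnit_iff_constantCoeff]; simp
  · rw [PowerSeries.isUnit_iff_constantCoeff, hf0]; exact isUnit_one
  intro w hw
  have hw0 : PowerSeries.constantCoeff w = 1 := by
    have := congrArg (PowerSeries.constantCoeff) hw
    simpa using this
  have hw1 : PowerSeries.coeff 1 w = -u := by
    have := congrArg (PowerSeries.coeff 1) hw
    rw [add_mul, one_mul, map_add, mul_assoc, PowerSeries.coeff_C_mul,
      PowerSeries.coeff_succ_X_mul, PowerSeries.coeff_zero_eq_constantCoeff_apply, hw0,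
      mul_one] at this
    simp only [PowerSeries.coeff_one, one_ne_zero, if_false] at this
    linear_combination this
  have hwn0 : ∀ n : ℕ, PowerSeries.coeff 0 (w ^ n) = 1 := by
    intro n
    rw [PowerSeries.coeff_zero_eq_constantCoeff_apply, map_pow, hw0, one_pow]
  have hwn1 : ∀ n : ℕ, PowerSeries.coeff 1 (w ^ n) = -((n : R) * u) := by
    intro n; rw [aux_coeff_one_pow w hw0, hw1]; ring
  constructor
  · simp
  intro h hh
  have hh0 : PowerSeries.coeff 0 h = 1 := by
    have := congrArg (PowerSeries.constantCoeff) hh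
    rw [map_mul, hf0, one_mul] at this
    simpa [PowerSeries.coeff_zero_eq_constantCoeff_apply] using this
  -- coefficients of the substituted series minus f
  set F : PowerSeries R := PowerSeries.substAt (PowerSeries.X * w) f - f with hF
  have hsub : ∀ p, PowerSeries.coeff p (PowerSeries.substAt (PowerSeries.X * w) f) =
      ∑ k ∈ Finset.range (p + 1),
        PowerSeries.coeff k f * PowerSeries.coeff p ((PowerSeries.X * w) ^ k) := by
    intro p
    rw [PowerSeries.substAt, PowerSeries.coeff_mk]
  have hFlow : ∀ p, p ≤ i → PowerSeries.coeff p F = 0 := by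
    intro p hp
    rw [hF, map_sub, hsub, sub_eq_zero]
    rcases eq_or_lt_of_le hp with hpi | hpi
    · -- p = i
      rw [hpi]
      rw [Finset.sum_eq_single i]
      · rw [aux_coeff_Xw_pow, if_pos le_rfl, Nat.sub_self, hwn0, mul_one]
      · intro k hk hki
        rcases Nat.eq_zero_or_pos k with rfl | hk1
        · rw [aux_coeff_Xw_pow, if_pos (Nat.zero_le _), pow_zero]
          simp [PowerSeries.coeff_one, Nat.one_le_iff_ne_zero.mp hi]
        · rw [hf k hk1 (by simp only [Finset.mem_range] at hk; omega), zero_mul]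
      · intro hmem; exact absurd (Finset.self_mem_range_succ i) hmem
    · -- p < i
      have hp0 : ∀ k ∈ Finset.range (p + 1), k ≠ 0 →
          PowerSeries.coeff k f * PowerSeries.coeff p ((PowerSeries.X * w) ^ k) = 0 := by
        intro k hk hk0
        rw [hf k (Nat.one_le_iff_ne_zero.mpr hk0) (by simp at hk; omega), zero_mul]
      rw [Finset.sum_eq_single 0 hp0 (fun hmem => absurd (Finset.mem_range.mpr (Nat.succ_pos p)) hmem)]
      rcases Nat.eq_zero_or_pos p with rfl | hp1
      · simp [PowerSeries.coeff_zero_eq_constantCoeff_apply, hf0]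
      · rw [pow_zero, PowerSeries.coeff_one, if_neg (Nat.one_le_iff_ne_zero.mp hp1),
          mul_zero, hf p hp1 (by omega)]
  have hFtop : PowerSeries.coeff (i + 1) F = -(i : R) * u * PowerSeries.coeff i f := by
    rw [hF, map_sub, hsub, Finset.sum_range_succ]
    have h1 : ∑ k ∈ Finset.range (i + 1),
        PowerSeries.coeff k f * PowerSeries.coeff (i + 1) ((PowerSeries.X * w) ^ k) =
        PowerSeries.coeff i f * (-((i : R) * u)) := by
      rw [Finset.sum_eq_single i]
      · rw [aux_coeff_Xw_pow, if_pos (by omega), show i + 1 - i = 1 by omega, hwn1]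
      · intro k hk hki
        rcases Nat.eq_zero_or_pos k with rfl | hk1
        · rw [aux_coeff_Xw_pow]; simp
        · rw [hf k hk1 (by simp at hk; omega), zero_mul]
      · intro hmem; exact absurd (Finset.self_mem_range_succ i) hmem
    rw [h1, aux_coeff_Xw_pow, if_pos le_rfl, Nat.sub_self, hwn0, mul_one]
    ring
  -- now the product with h
  have hprod : PowerSeries.substAt (PowerSeries.X * w) f * h = F * h + 1 := by
    rw [hF, sub_mul, hh]; ring
  constructor
  · intro k hk1 hki
    rw [hprod, map_add, PowerSeries.coeff_one, if_neg (by omega), add_zero,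
      PowerSeries.coeff_mul]
    refine Finset.sum_eq_zero fun p hp => ?_
    rw [hFlow p.1 (by rw [Finset.HasAntidiagonal.mem_antidiagonal] at hp; omega), zero_mul]
  · rw [hprod, map_add, PowerSeries.coeff_one, if_neg (by omega), add_zero,
      PowerSeries.coeff_mul]
    rw [Finset.sum_eq_single (i + 1, 0)]
    · rw [hFtop, hh0, mul_one]
    · intro p hp hne
      rw [Finset.HasAntidiagonal.mem_antidiagonal] at hp
      rw [hFlow p.1 (by rcases Nat.lt_or_ge p.1 (i+1) with h' | h'; · omega
                        · exfalso; apply hne; have : p.2 = 0 := by omega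
                          have : p.1 = i + 1 := by omega
                          exact Prod.ext (by omega) (by omega)), zero_mul]
    · intro hmem; exact absurd (Finset.HasAntidiagonal.mem_antidiagonal.mpr (by simp)) hmem
end
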